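/- arXiv:1705.11149 — 4 statements merged into one kernel-verified Lean document; each statement's English description precedes it below -/
import Mathlib

section
/- Let λ ∈ ℝ with λ ≠ n/β. Define g_λ ∈ ℓ²_ap(𝕋_n;ℂ) by g_λ(α) = (1 − βλ/n)^{(n/β)(α − β/n)} / (1 + |1 − βλ/n|^{−n}) for α ∈ 𝕋_n ∩ (−β, 0] (here (n/β)(α − β/n) ∈ {−n,…,−1} is an integer and 1 − βλ/n ≠ 0), extended to 𝕋_n by antiperiodicity. Then g_λ is the unique function f ∈ ℓ²_ap(𝕋_n;ℂ) satisfying the difference equation (𝔡f)(α) + λ f(α) = −2 δ_ap(α) for all α ∈ 𝕋_n. -/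
open scoped BigOperators

noncomputable section

/-- The antiperiodic discrete delta function `δ_ap` on the discrete torus
`𝕋_n ≅ ZMod (2n)` (the point `j : ZMod (2n)` corresponds to `α = jβ/n`):
`δ_ap(0) = n/(2β)`, `δ_ap(β) = -n/(2β)` and `δ_ap = 0` elsewhere. -/
def deltaAp (n : ℕ) (β : ℝ) (j : ZMod (2 * n)) : ℂ :=
  if j = 0 then (((n : ℝ) / (2 * β) : ℝ) : ℂ)
  else if j = (n : ZMod (2 * n)) then ((-((n : ℝ) / (2 * β)) : ℝ) : ℂ)
  else 0

/-- The function `g_λ ∈ ℓ²_ap(𝕋_n; ℂ)` (for `λ ≠ n/β`), defined on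
`𝕋_n ∩ (-β, 0]` by `g_λ(α) = (1 - βλ/n)^{(n/β)(α - β/n)} / (1 + |1 - βλ/n|^{-n})`
and extended to `𝕋_n` by antiperiodicity.  In the identification `𝕋_n ≅ ZMod (2n)`
(`j ↔ α = jβ/n`), the part `𝕋_n ∩ (-β, 0]` corresponds to `j.val = 0` and
`n + 1 ≤ j.val ≤ 2n - 1` (where `α = (j.val - 2n)β/n`), and the antiperiodic extension
gives the values for `1 ≤ j.val ≤ n`. -/
def gFun (n : ℕ) (β lam : ℝ) (j : ZMod (2 * n)) : ℂ :=
  if j.val = 0 then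
    (((1 - β * lam / n) ^ (-1 : ℤ) / (1 + |1 - β * lam / n| ^ (-(n : ℤ))) : ℝ) : ℂ)
  else if j.val ≤ n then
    ((-((1 - β * lam / n) ^ ((j.val : ℤ) - n - 1) / (1 + |1 - β * lam / n| ^ (-(n : ℤ)))) : ℝ) : ℂ)
  else
    (((1 - β * lam / n) ^ ((j.val : ℤ) - 2 * n - 1) / (1 + |1 - β * lam / n| ^ (-(n : ℤ))) : ℝ) : ℂ)

/-- STATEMENT 4: For `λ ≠ n/β`, the function `g_λ` is antiperiodic and is the unique
antiperiodic solution of the difference equation `(𝔡 f)(α) + λ f(α) = -2 δ_ap(α)`, where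
`(𝔡 f)(α) = (n/β)(f(α + β/n) - f(α))`. -/
theorem gFun_solves_and_unique
    (n : ℕ) (hn : 2 ≤ n) (hn' : Even n) (β lam : ℝ) (hβ : 0 < β)
    (hlam : lam ≠ (n : ℝ) / β) :
    ((∀ j : ZMod (2 * n), gFun n β lam (j + n) = - gFun n β lam j) ∧
      (∀ j : ZMod (2 * n),
        (((n : ℝ) / β : ℝ) : ℂ) * (gFun n β lam (j + 1) - gFun n β lam j) +
            (lam : ℂ) * gFun n β lam j = -2 * deltaAp n β j)) ∧
    (∀ f : ZMod (2 * n) → ℂ,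
      (∀ j : ZMod (2 * n), f (j + n) = - f j) →
      (∀ j : ZMod (2 * n),
        (((n : ℝ) / β : ℝ) : ℂ) * (f (j + 1) - f j) + (lam : ℂ) * f j =
          -2 * deltaAp n β j) →
      f = gFun n β lam) := by
  haveI : NeZero (2 * n) := ⟨by omega⟩
  have hn0 : (n : ℝ) ≠ 0 := Nat.cast_ne_zero.mpr (by omega)
  have hβ0 : β ≠ 0 := ne_of_gt hβ
  set c : ℝ := 1 - β * lam / n with hc
  have hc0 : c ≠ 0 := by
    intro h
    apply hlam
    have : β * lam / n = 1 := by rw [hc] at h; linarith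
    field_simp at this
    field_simp
    linarith
  have hblam : β * lam = n * (1 - c) := by rw [hc]; field_simp; ring
  set D : ℝ := 1 + |c| ^ (-(n : ℤ)) with hD
  have hDpos : (0:ℝ) < D := by
    rw [hD]; positivity
  have hD0 : D ≠ 0 := ne_of_gt hDpos
  have habs : |c| ^ (-(n : ℤ)) = c ^ (-(n : ℤ)) := by
    rw [zpow_neg, zpow_neg, zpow_natCast, zpow_natCast, hn'.pow_abs]
  have hne : ∀ a b : ℕ, a < 2*n → b < 2*n → a ≠ b →
      ((a : ℕ) : ZMod (2*n)) ≠ ((b : ℕ) : ZMod (2*n)) := by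
    intro a b ha hb hab h
    apply hab
    have := congrArg ZMod.val h
    rwa [ZMod.val_natCast, ZMod.val_natCast, Nat.mod_eq_of_lt ha, Nat.mod_eq_of_lt hb] at this
  -- antiperiodicity
  have hap : ∀ j : ZMod (2 * n), gFun n β lam (j + n) = - gFun n β lam j := by
    intro j
    obtain ⟨k, hk, rfl⟩ : ∃ k : ℕ, k < 2 * n ∧ (k : ZMod (2 * n)) = j :=
      ⟨j.val, j.val_lt, ZMod.natCast_rightInverse j⟩
    rw [show (k : ZMod (2 * n)) + (n : ZMod (2 * n)) = ((k + n : ℕ) : ZMod (2 * n)) by push_cast; ring]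
    simp only [gFun, ZMod.val_natCast, ← hc, ← hD]
    rcases lt_or_ge k n with hkn | hkn
    · rw [Nat.mod_eq_of_lt (by omega : k + n < 2 * n), Nat.mod_eq_of_lt (by omega : k < 2 * n)]
      by_cases hk0 : k = 0
      · subst hk0
        rw [if_neg (show ¬ (0 + n = 0) by omega), if_pos (show 0 + n ≤ n by omega),
          if_pos rfl]
        push_cast
        ring_nf
      · rw [if_neg (show ¬ (k + n = 0) by omega), if_neg (show ¬ (k + n ≤ n) by omega),
          if_neg hk0, if_pos (show k ≤ n by omega)]
        push_cast
        rw [show ((k : ℤ) + n) - 2 * n - 1 = (k : ℤ) - n - 1 by ring]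
        ring
    · by_cases hkn2 : k = n
      · rw [show k + n = 0 + 2 * n by omega, Nat.add_mod_right, Nat.zero_mod,
          Nat.mod_eq_of_lt (by omega : k < 2 * n)]
        rw [if_pos rfl, if_neg (show ¬ (k = 0) by omega), if_pos (show k ≤ n by omega)]
        push_cast
        rw [show ((k : ℤ)) - n - 1 = (-1 : ℤ) by rw [hkn2]; ring]
        ring
      · rw [show k + n = (k - n) + 2 * n by omega, Nat.add_mod_right,
          Nat.mod_eq_of_lt (by omega : k - n < 2 * n),
          Nat.mod_eq_of_lt (by omega : k < 2 * n)]
        rw [if_neg (show ¬ (k - n = 0) by omega), if_pos (show k - n ≤ n by omega),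
          if_neg (show ¬ (k = 0) by omega), if_neg (show ¬ (k ≤ n) by omega)]
        push_cast [Nat.cast_sub hkn]
        rw [show ((k : ℤ) - n) - n - 1 = (k : ℤ) - 2 * n - 1 by ring]
  -- homogeneous-step helper
  have hnC : ((n : ℝ) : ℂ) ≠ 0 := by exact_mod_cast hn0
  have hβC : ((β : ℝ) : ℂ) ≠ 0 := by exact_mod_cast hβ0
  have hnC' : ((n : ℕ) : ℂ) ≠ 0 := Nat.cast_ne_zero.mpr (by omega)
  have hhom : ∀ X Y : ℂ, X = ((c : ℝ) : ℂ) * Y →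
      (((n : ℝ) / β : ℝ) : ℂ) * (X - Y) + (lam : ℂ) * Y = 0 := by
    intro X Y h
    subst h
    rw [hc]
    push_cast
    field_simp
    ring
  have hzs : ∀ e1 e2 : ℤ, e1 = e2 + 1 → c ^ e1 = c * c ^ e2 := by
    intro e1 e2 h
    rw [h, zpow_add_one₀ hc0]
    ring
  -- main equation
  have heq : ∀ j : ZMod (2 * n),
      (((n : ℝ) / β : ℝ) : ℂ) * (gFun n β lam (j + 1) - gFun n β lam j) +
        (lam : ℂ) * gFun n β lam j = -2 * deltaAp n β j := by
    intro j
    obtain ⟨k, hk, rfl⟩ : ∃ k : ℕ, k < 2 * n ∧ (k : ZMod (2 * n)) = j :=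
      ⟨j.val, j.val_lt, ZMod.natCast_rightInverse j⟩
    rw [show (k : ZMod (2 * n)) + 1 = ((k + 1 : ℕ) : ZMod (2 * n)) by push_cast; ring]
    by_cases hk0 : k = 0
    · -- inhomogeneous at 0
      simp only [gFun, deltaAp, ZMod.val_natCast, ← hc, ← hD]
      rw [if_pos (show ((k : ℕ) : ZMod (2 * n)) = 0 by rw [hk0]; exact Nat.cast_zero)]
      rw [Nat.mod_eq_of_lt (by omega : k + 1 < 2 * n), Nat.mod_eq_of_lt (by omega : k < 2 * n)]
      rw [if_neg (show ¬ (k + 1 = 0) by omega), if_pos (show k + 1 ≤ n by omega), if_pos hk0]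
      rw [show ((k + 1 : ℕ) : ℤ) - n - 1 = -(n : ℤ) by push_cast; omega, ← habs]
      have key : ((n:ℝ) / β) * ((-(|c| ^ (-(n:ℤ)) / D)) - c ^ (-1:ℤ) / D) +
          lam * (c ^ (-1:ℤ) / D) = -2 * ((n:ℝ) / (2 * β)) := by
        rw [zpow_neg_one, hD]
        have hA : (0:ℝ) < |c| ^ (-(n:ℤ)) := by positivity
        have h1A : (1:ℝ) + |c| ^ (-(n:ℤ)) ≠ 0 := by positivity
        field_simp
        linear_combination hblam
      exact_mod_cast key
    by_cases hkn : k = n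
    · -- inhomogeneous at n
      simp only [gFun, deltaAp, ZMod.val_natCast, ← hc, ← hD]
      rw [if_neg (show ((k : ℕ) : ZMod (2 * n)) ≠ 0 by
          simpa using hne k 0 hk (by omega) hk0),
        if_pos (show ((k : ℕ) : ZMod (2 * n)) = ((n : ℕ) : ZMod (2 * n)) by rw [hkn])]
      rw [Nat.mod_eq_of_lt (by omega : k + 1 < 2 * n), Nat.mod_eq_of_lt (by omega : k < 2 * n)]
      rw [if_neg (show ¬ (k + 1 = 0) by omega), if_neg (show ¬ (k + 1 ≤ n) by omega),
        if_neg hk0, if_pos (show k ≤ n by omega)]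
      rw [show ((k + 1 : ℕ) : ℤ) - 2 * n - 1 = -(n : ℤ) by push_cast; omega, ← habs]
      rw [show ((k : ℕ) : ℤ) - n - 1 = (-1 : ℤ) by omega]
      have key : ((n:ℝ) / β) * ((|c| ^ (-(n:ℤ)) / D) - (-(c ^ (-1:ℤ) / D))) +
          lam * (-(c ^ (-1:ℤ) / D)) = -2 * (-((n:ℝ) / (2 * β))) := by
        rw [zpow_neg_one, hD]
        have hA : (0:ℝ) < |c| ^ (-(n:ℤ)) := by positivity
        have h1A : (1:ℝ) + |c| ^ (-(n:ℤ)) ≠ 0 := by positivity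
        field_simp
        linear_combination (-1) * hblam
      exact_mod_cast key
    · -- homogeneous
      have hδ : deltaAp n β ((k : ℕ) : ZMod (2*n)) = 0 := by
        simp only [deltaAp]
        rw [if_neg, if_neg]
        · exact hne k n hk (by omega) hkn
        · simpa using hne k 0 hk (by omega) hk0
      rw [hδ, mul_zero]
      apply hhom
      simp only [gFun, ZMod.val_natCast, ← hc, ← hD]
      by_cases hk2 : k = 2 * n - 1
      · rw [show k + 1 = 0 + 2 * n by omega, Nat.add_mod_right, Nat.zero_mod,
          Nat.mod_eq_of_lt (by omega : k < 2 * n)]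
        rw [if_pos rfl, if_neg hk0, if_neg (show ¬ (k ≤ n) by omega)]
        rw [show (-1 : ℤ) = ((k : ℕ) : ℤ) - 2 * n - 1 + 1 by
          rw [hk2]; push_cast [Nat.cast_sub (by omega : 1 ≤ 2 * n)]; ring]
        rw [zpow_add_one₀ hc0]
        push_cast
        ring
      · rw [Nat.mod_eq_of_lt (by omega : k + 1 < 2 * n), Nat.mod_eq_of_lt (by omega : k < 2 * n)]
        rcases lt_or_ge k n with hkl | hkl
        · -- 1 ≤ k ≤ n - 1
          rw [if_neg (show ¬ (k + 1 = 0) by omega), if_pos (show k + 1 ≤ n by omega),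
            if_neg hk0, if_pos (show k ≤ n by omega)]
          rw [hzs (((k+1 : ℕ) : ℤ) - n - 1) (((k : ℕ) : ℤ) - n - 1) (by push_cast; ring)]
          push_cast
          ring
        · -- n + 1 ≤ k ≤ 2n - 2
          rw [if_neg (show ¬ (k + 1 = 0) by omega), if_neg (show ¬ (k + 1 ≤ n) by omega),
            if_neg hk0, if_neg (show ¬ (k ≤ n) by omega)]
          rw [hzs (((k+1 : ℕ) : ℤ) - 2 * n - 1) (((k : ℕ) : ℤ) - 2 * n - 1) (by push_cast; ring)]
          push_cast
          ring
  refine ⟨⟨hap, heq⟩, ?_⟩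
  -- uniqueness
  intro f hfap hfeq
  have hstep : ∀ j : ZMod (2 * n), f (j + 1) - gFun n β lam (j + 1) =
      ((c : ℝ) : ℂ) * (f j - gFun n β lam j) := by
    intro j
    have h1 := hfeq j
    have h2 := heq j
    have h3 : (((n : ℝ) / β : ℝ) : ℂ) * ((f (j+1) - gFun n β lam (j+1)) - (f j - gFun n β lam j)) +
        (lam : ℂ) * (f j - gFun n β lam j) = 0 := by
      push_cast at h1 h2 ⊢
      linear_combination h1 - h2
    have hcC : ((n : ℕ) : ℂ) * ((c : ℝ) : ℂ) = ((n : ℕ) : ℂ) - (β : ℂ) * (lam : ℂ) := by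
      rw [hc]
      push_cast
      field_simp
    push_cast at h3
    field_simp at h3
    apply mul_left_cancel₀ hnC'
    linear_combination h3 - (f j - gFun n β lam j) * hcC
  have hpow : ∀ k : ℕ, f ((k : ℕ) : ZMod (2 * n)) - gFun n β lam ((k : ℕ) : ZMod (2 * n)) =
      ((c : ℝ) : ℂ) ^ k * (f 0 - gFun n β lam 0) := by
    intro k
    induction k with
    | zero => simp
    | succ m ih =>
      have := hstep ((m : ℕ) : ZMod (2 * n))
      rw [show ((m : ℕ) : ZMod (2 * n)) + 1 = (((m + 1 : ℕ)) : ZMod (2 * n)) by push_cast; ring] at this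
      rw [this, ih, pow_succ]
      ring
  have h0 : f 0 - gFun n β lam 0 = 0 := by
    have hn1 := hpow n
    have hap0 : f ((n : ℕ) : ZMod (2 * n)) - gFun n β lam ((n : ℕ) : ZMod (2 * n)) =
        -(f 0 - gFun n β lam 0) := by
      have h1 := hfap 0
      have h2 := hap 0
      rw [zero_add] at h1 h2
      rw [h1, h2]
      ring
    rw [hap0] at hn1
    have hcn : ((c : ℝ) : ℂ) ^ n + 1 ≠ 0 := by
      have : (0:ℝ) < c ^ n + 1 := by
        have := hn'.pow_pos hc0
        linarith
      intro h
      have h2 : ((c ^ n + 1 : ℝ) : ℂ) = 0 := by push_cast; linear_combination h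
      rw [Complex.ofReal_eq_zero] at h2
      linarith
    have : (((c : ℝ) : ℂ) ^ n + 1) * (f 0 - gFun n β lam 0) = 0 := by linear_combination -hn1
    rcases mul_eq_zero.mp this with h | h
    · exact absurd h hcn
    · exact h
  funext j
  obtain ⟨k, hk, rfl⟩ : ∃ k : ℕ, k < 2 * n ∧ (k : ZMod (2 * n)) = j :=
    ⟨j.val, j.val_lt, ZMod.natCast_rightInverse j⟩
  have := hpow k
  rw [h0, mul_zero] at this
  linear_combination this
end
end

section
/- For λ = n/β, the function g ∈ ℓ²_ap(𝕋_n;ℂ) defined by g(β/n) = −1, g(β/n − β) = 1, and g(α) = 0 for all other α ∈ 𝕋_n, is the unique function f ∈ ℓ²_ap(𝕋_n;ℂ) satisfying (𝔡f)(α) + (n/β) f(α) = −2 δ_ap(α) for all α ∈ 𝕋_n. -/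
open scoped BigOperators

noncomputable section

/-- The function `g ∈ ℓ²_ap(𝕋_n; ℂ)` with `g(β/n) = -1`, `g(β/n - β) = 1` and `g = 0`
elsewhere (the point `j : ZMod (2n)` corresponds to `α = jβ/n`, so `β/n ↔ j = 1` and
`β/n - β ↔ j = 1 - n`). -/
def gSing (n : ℕ) (j : ZMod (2 * n)) : ℂ :=
  if j = 1 then -1
  else if j = 1 - (n : ZMod (2 * n)) then 1
  else 0

/-- For `λ = n/β`, the function `g` with `g(β/n) = -1`, `g(β/n - β) = 1` and
`g = 0` elsewhere is the unique antiperiodic solution of the difference equation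
`(𝔡 f)(α) + (n/β) f(α) = -2 δ_ap(α)`, where `(𝔡 f)(α) = (n/β)(f(α + β/n) - f(α))`. -/
theorem gSing_solves_and_unique
    (n : ℕ) (hn : 2 ≤ n) (hn' : Even n) (β : ℝ) (hβ : 0 < β) :
    ((∀ j : ZMod (2 * n), gSing n (j + n) = - gSing n j) ∧
      (∀ j : ZMod (2 * n),
        (((n : ℝ) / β : ℝ) : ℂ) * (gSing n (j + 1) - gSing n j) +
            (((n : ℝ) / β : ℝ) : ℂ) * gSing n j = -2 * deltaAp n β j)) ∧
    (∀ f : ZMod (2 * n) → ℂ,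
      (∀ j : ZMod (2 * n), f (j + n) = - f j) →
      (∀ j : ZMod (2 * n),
        (((n : ℝ) / β : ℝ) : ℂ) * (f (j + 1) - f j) + (((n : ℝ) / β : ℝ) : ℂ) * f j =
          -2 * deltaAp n β j) →
      f = gSing n) := by
  haveI : NeZero (2 * n) := ⟨by omega⟩
  have hβ' : (β : ℂ) ≠ 0 := by exact_mod_cast hβ.ne'
  have hnR : ((n : ℝ) : ℂ) ≠ 0 := by
    exact_mod_cast (show (n : ℝ) ≠ 0 by positivity)
  have hnz : (n : ZMod (2 * n)) ≠ 0 := by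
    rw [Ne, ZMod.natCast_eq_zero_iff]
    intro h
    have := Nat.le_of_dvd (by omega) h
    omega
  have hneg : -(n : ZMod (2 * n)) = (n : ZMod (2 * n)) := by
    have h : (n : ZMod (2 * n)) + n = 0 := by
      have := ZMod.natCast_self (2 * n)
      push_cast at this
      linear_combination this
    linear_combination -h
  set c : ℂ := (((n : ℝ) / β : ℝ) : ℂ) with hc
  have hcval : c = (n : ℂ) / β := by push_cast [hc]; ring
  have hc0 : c ≠ 0 := by
    rw [hcval]
    exact div_ne_zero hnR hβ'
  have key : ∀ j : ZMod (2 * n), c * gSing n (j + 1) = -2 * deltaAp n β j := by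
    intro j
    by_cases hj0 : j = 0
    · subst hj0
      simp only [zero_add, gSing, deltaAp, if_pos rfl]
      rw [hcval]
      push_cast
      field_simp
    · by_cases hjn : j = (n : ZMod (2 * n))
      · subst hjn
        have h1 : (n : ZMod (2 * n)) + 1 ≠ 1 := by
          intro h
          exact hnz (by linear_combination h)
        have h2 : (n : ZMod (2 * n)) + 1 = 1 - n := by linear_combination -hneg
        simp only [gSing, deltaAp, if_neg h1, if_pos h2, if_neg hnz, if_pos rfl]
        rw [hcval]
        push_cast
        field_simp
      · have h1 : j + 1 ≠ 1 := by
          intro h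
          exact hj0 (by linear_combination h)
        have h2 : j + 1 ≠ 1 - n := by
          intro h
          exact hjn (by linear_combination h + hneg)
        simp only [gSing, deltaAp, if_neg h1, if_neg h2, if_neg hj0, if_neg hjn]
        ring
  refine ⟨⟨?_, ?_⟩, ?_⟩
  · intro j
    have hne : (1 : ZMod (2 * n)) ≠ 1 - n := by
      intro h
      exact hnz (by linear_combination h)
    by_cases hj1 : j = 1
    · subst hj1
      have h1 : (1 : ZMod (2 * n)) + n ≠ 1 := by
        intro h
        exact hnz (by linear_combination h)
      have h2 : (1 : ZMod (2 * n)) + n = 1 - n := by linear_combination -hneg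
      simp only [gSing, if_neg h1, if_pos h2, if_pos rfl]
      norm_num
    · by_cases hj2 : j = 1 - (n : ZMod (2 * n))
      · subst hj2
        have h1 : (1 : ZMod (2 * n)) - n + n = 1 := by ring
        rw [h1]
        simp only [gSing, if_pos rfl, if_neg hne, if_neg (Ne.symm hne)]
        norm_num
      · have h1 : j + n ≠ 1 := by
          intro h
          exact hj2 (by linear_combination h)
        have h2 : j + n ≠ 1 - n := by
          intro h
          exact hj1 (by linear_combination h + hneg)
        simp only [gSing, if_neg h1, if_neg h2, if_neg hj1, if_neg hj2]
        ring
  · intro j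
    linear_combination key j
  · intro f _ hf
    funext j
    have h1 := hf (j - 1)
    have h2 := key (j - 1)
    rw [sub_add_cancel] at h1 h2
    exact mul_left_cancel₀ hc0 (by linear_combination h1 - h2)
end
end

section
/- Let 𝒜, 𝔎, a, ρ be as in the context, with ρ satisfying the quasi-free vanishing condition (i) on normally ordered monomials. Then for all N₁, N₂ ∈ ℕ with N₁ ≠ N₂, every permutation π of {1,…,N₁+N₂}, and all φ₁,…,φ_{N₁+N₂} ∈ 𝔎: ρ(𝕆_π(a⁺(φ₁),…,a⁺(φ_{N₁}), a(φ_{N₁+N₂}),…,a(φ_{N₁+1}))) = 0. -/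
open scoped BigOperators

noncomputable section

/-- The signed monomial `𝕆_π(A₁, …, A_m) = (-1)^π A_{π⁻¹(1)} ⋯ A_{π⁻¹(m)}`
(the factor `A_k` is placed at position `π(k)`). -/
def Opi {𝒜 : Type*} [Ring 𝒜] {m : ℕ} (π : Equiv.Perm (Fin m)) (A : Fin m → 𝒜) : 𝒜 :=
  (Equiv.Perm.sign π : ℤ) • (List.ofFn fun i => A (π⁻¹ i)).prod

namespace QFaux

variable {α : Type*}

/-- number of inversions: pairs (annihilator, later creator) -/
def invL : List (Bool × α) → ℕ
  | [] => 0
  | x :: t => (if x.1 then 0 else t.countP (fun y => y.1)) + invL t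

@[simp] lemma invL_nil : invL ([] : List (Bool × α)) = 0 := rfl

@[simp] lemma invL_cons (x : Bool × α) (t : List (Bool × α)) :
    invL (x :: t) = (if x.1 then 0 else t.countP (fun y => y.1)) + invL t := rfl

lemma invL_append (A B : List (Bool × α)) :
    invL (A ++ B) = invL A + invL B +
      A.countP (fun y => !y.1) * B.countP (fun y => y.1) := by
  induction A with
  | nil => simp
  | cons x t ih =>
    rcases x with ⟨b, y⟩
    cases b <;> simp [ih, List.countP_append, List.countP_cons] <;> ring

lemma sorted_decomp : ∀ L : List (Bool × α), invL L = 0 →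
    ∃ T Fl : List (Bool × α), L = T ++ Fl ∧ (∀ x ∈ T, x.1 = true) ∧
      (∀ x ∈ Fl, x.1 = false) := by
  intro L
  induction L with
  | nil => exact fun _ => ⟨[], [], by simp⟩
  | cons x t ih =>
    intro h
    rcases x with ⟨b, y⟩
    cases b
    · -- head false : all of t must be false
      refine ⟨[], (false, y) :: t, by simp, by simp, ?_⟩
      have hc : t.countP (fun y => y.1) = 0 := by
        have h' : t.countP (fun y => y.1) + invL t = 0 := by simpa [invL] using h
        omega
      intro z hz
      rcases List.mem_cons.mp hz with h' | h'
      · rw [h']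
      · have := List.countP_eq_zero.mp hc _ h'
        simpa using this
    · obtain ⟨T, Fl, rfl, hT, hF⟩ := ih (by simpa [invL] using h)
      exact ⟨(true, y) :: T, Fl, rfl, by simpa using hT, hF⟩

lemma adj_decomp : ∀ L : List (Bool × α), invL L ≠ 0 →
    ∃ (L₁ : List (Bool × α)) (ψ χ : α) (L₂ : List (Bool × α)),
      L = L₁ ++ (false, ψ) :: (true, χ) :: L₂ := by
  intro L
  induction L with
  | nil => simp
  | cons x t ih =>
    intro h
    rcases x with ⟨b, y⟩
    cases b
    · match t with
      | [] => simp [invL] at h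
      | (true, z) :: t' => exact ⟨[], y, z, t', rfl⟩
      | (false, z) :: t' =>
        have ht : invL ((false, z) :: t') ≠ 0 := by
          have e1 : invL ((false, y) :: (false, z) :: t')
              = t'.countP (fun y => y.1) + (t'.countP (fun y => y.1) + invL t') := by
            simp [invL, List.countP_cons]
          have e2 : invL ((false, z) :: t') = t'.countP (fun y => y.1) + invL t' := by
            simp [invL]
          omega
        obtain ⟨L₁, ψ, χ, L₂, heq⟩ := ih ht
        exact ⟨(false, y) :: L₁, ψ, χ, L₂, by rw [heq]; rfl⟩
    · have ht : invL t ≠ 0 := by simpa [invL] using h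
      obtain ⟨L₁, ψ, χ, L₂, heq⟩ := ih ht
      exact ⟨(true, y) :: L₁, ψ, χ, L₂, by rw [heq]; rfl⟩

end QFaux

open QFaux in
/-- the operator corresponding to a tagged vector -/
def Fop {𝒜 : Type*} [Ring 𝒜] [StarRing 𝒜] {𝔎 : Type*} (a : 𝔎 → 𝒜)
    (x : Bool × 𝔎) : 𝒜 :=
  if x.1 then star (a x.2) else a x.2

set_option maxHeartbeats 1000000 in
open QFaux in
lemma key_vanish
    {𝒜 : Type*} [Ring 𝒜] [Algebra ℂ 𝒜] [StarRing 𝒜]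
    {𝔎 : Type*} [NormedAddCommGroup 𝔎] [InnerProductSpace ℂ 𝔎]
    (a : 𝔎 → 𝒜)
    (hCAR2 : ∀ φ₁ φ₂ : 𝔎,
      star (a φ₁) * a φ₂ + a φ₂ * star (a φ₁) = (inner ℂ φ₂ φ₁ : ℂ) • (1 : 𝒜))
    (ρ : 𝒜 →ₗ[ℂ] ℂ)
    (hQF0 : ∀ (N₁ N₂ : ℕ), N₁ ≠ N₂ → ∀ (φ : Fin N₁ → 𝔎) (ψ : Fin N₂ → 𝔎),
      ρ ((List.ofFn fun i : Fin N₁ => star (a (φ i))).prod *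
          (List.ofFn fun i : Fin N₂ => a (ψ i.rev)).prod) = 0) :
    ∀ (m : ℕ) (L : List (Bool × 𝔎)), L.length + invL L ≤ m →
      L.countP (fun x => x.1) ≠ L.countP (fun x => !x.1) →
      ρ ((L.map (Fop a)).prod) = 0 := by
  intro m
  induction m with
  | zero =>
    intro L hm hne
    have : L = [] := List.length_eq_zero_iff.mp (by omega)
    subst this; simp at hne
  | succ m ih =>
    intro L hm hne
    by_cases h0 : invL L = 0
    · -- normally ordered case
      obtain ⟨T, Fl, rfl, hT, hF⟩ := sorted_decomp L h0
      have hcT : T.countP (fun x => x.1) = T.length :=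
        List.countP_eq_length.mpr (fun x hx => by simp [hT x hx])
      have hcF : Fl.countP (fun x => !x.1) = Fl.length :=
        List.countP_eq_length.mpr (fun x hx => by simp [hF x hx])
      have hcT0 : Fl.countP (fun x => x.1) = 0 :=
        List.countP_eq_zero.mpr (fun x hx => by simp [hF x hx])
      have hcF0 : T.countP (fun x => !x.1) = 0 :=
        List.countP_eq_zero.mpr (fun x hx => by simp [hT x hx])
      have hlen : T.length ≠ Fl.length := by
        simp only [List.countP_append, hcT, hcF, hcT0, hcF0] at hne; omega
      have hTmap : T.map (Fop a) =
          List.ofFn (fun i : Fin T.length => star (a (T.get i).2)) := by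
        conv_lhs => rw [← List.ofFn_get T, List.map_ofFn]
        refine congrArg List.ofFn (funext fun i => ?_)
        have hx : (T[(i : ℕ)]'i.2).1 = true := hT _ (List.getElem_mem i.2)
        simp [Fop, hx]
      have hFmap : Fl.map (Fop a) =
          List.ofFn (fun i : Fin Fl.length => a ((Fl.get i.rev.rev).2)) := by
        conv_lhs => rw [← List.ofFn_get Fl, List.map_ofFn]
        refine congrArg List.ofFn (funext fun i => ?_)
        have hx : (Fl[(i : ℕ)]'i.2).1 = false := hF _ (List.getElem_mem i.2)
        simp [Fop, hx, Fin.rev_rev]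
      rw [List.map_append, List.prod_append, hTmap, hFmap]
      exact hQF0 T.length Fl.length hlen _ (fun j => (Fl.get j.rev).2)
    · -- there is an adjacent bad pair
      obtain ⟨L₁, ψ, χ, L₂, rfl⟩ := adj_decomp L h0
      have hswap : a ψ * star (a χ) =
          (inner ℂ ψ χ : ℂ) • (1 : 𝒜) - star (a χ) * a ψ := by
        have := hCAR2 χ ψ
        linear_combination (norm := noncomm_ring) this
      have hprod : ((L₁ ++ (false, ψ) :: (true, χ) :: L₂).map (Fop a)).prod =
          (inner ℂ ψ χ : ℂ) • ((L₁ ++ L₂).map (Fop a)).prod -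
          ((L₁ ++ (true, χ) :: (false, ψ) :: L₂).map (Fop a)).prod := by
        have hF1 : Fop a (false, ψ) = a ψ := by simp [Fop]
        have hF2 : Fop a (true, χ) = star (a χ) := by simp [Fop]
        simp only [List.map_append, List.map_cons, List.prod_append, List.prod_cons,
          hF1, hF2]
        rw [show a ψ * (star (a χ) * (L₂.map (Fop a)).prod)
              = (a ψ * star (a χ)) * (L₂.map (Fop a)).prod from (mul_assoc _ _ _).symm,
            hswap]
        simp only [sub_mul, smul_mul_assoc, one_mul, mul_sub, mul_smul_comm, mul_assoc]
      -- counts bookkeeping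
      have c1 : (L₁ ++ (false, ψ) :: (true, χ) :: L₂).countP (fun x => x.1)
          = L₁.countP (fun x => x.1) + L₂.countP (fun x => x.1) + 1 := by
        simp [List.countP_append, List.countP_cons]; omega
      have c2 : (L₁ ++ (false, ψ) :: (true, χ) :: L₂).countP (fun x => !x.1)
          = L₁.countP (fun x => !x.1) + L₂.countP (fun x => !x.1) + 1 := by
        simp [List.countP_append, List.countP_cons]; omega
      have d1 : (L₁ ++ L₂).countP (fun x => x.1)
          = L₁.countP (fun x => x.1) + L₂.countP (fun x => x.1) := by
        simp [List.countP_append]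
      have d2 : (L₁ ++ L₂).countP (fun x => !x.1)
          = L₁.countP (fun x => !x.1) + L₂.countP (fun x => !x.1) := by
        simp [List.countP_append]
      have e1 : (L₁ ++ (true, χ) :: (false, ψ) :: L₂).countP (fun x => x.1)
          = L₁.countP (fun x => x.1) + L₂.countP (fun x => x.1) + 1 := by
        simp [List.countP_append, List.countP_cons]; omega
      have e2 : (L₁ ++ (true, χ) :: (false, ψ) :: L₂).countP (fun x => !x.1)
          = L₁.countP (fun x => !x.1) + L₂.countP (fun x => !x.1) + 1 := by
        simp [List.countP_append, List.countP_cons]; omega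
      -- inversion bookkeeping
      have i0 : invL (L₁ ++ (false, ψ) :: (true, χ) :: L₂)
          = invL L₁ + invL L₂ + 1 + L₂.countP (fun y => y.1)
            + L₁.countP (fun y => !y.1) * (1 + L₂.countP (fun y => y.1)) := by
        rw [invL_append]; simp [List.countP_cons]; ring
      have i1 : invL (L₁ ++ L₂)
          = invL L₁ + invL L₂ + L₁.countP (fun y => !y.1) * L₂.countP (fun y => y.1) := by
        rw [invL_append]
      have i2 : invL (L₁ ++ (true, χ) :: (false, ψ) :: L₂)
          = invL L₁ + invL L₂ + L₂.countP (fun y => y.1)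
            + L₁.countP (fun y => !y.1) * (1 + L₂.countP (fun y => y.1)) := by
        rw [invL_append]; simp [List.countP_cons]; ring
      have hlen0 : (L₁ ++ (false, ψ) :: (true, χ) :: L₂).length
          = L₁.length + L₂.length + 2 := by simp; omega
      have r1 : ρ (((L₁ ++ L₂).map (Fop a)).prod) = 0 := by
        refine ih (L₁ ++ L₂) ?_ ?_
        · have := hm; rw [hlen0, i0] at this
          rw [List.length_append, i1]
          have hmul : List.countP (fun y => !y.1) L₁ * (1 + List.countP (fun y => y.1) L₂)
              = List.countP (fun y => !y.1) L₁ * List.countP (fun y => y.1) L₂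
                + List.countP (fun y => !y.1) L₁ := by ring
          omega
        · rw [d1, d2]; rw [c1, c2] at hne; omega
      have r2 : ρ (((L₁ ++ (true, χ) :: (false, ψ) :: L₂).map (Fop a)).prod) = 0 := by
        refine ih _ ?_ ?_
        · have := hm; rw [hlen0, i0] at this
          rw [List.length_append, i2]
          simp only [List.length_cons] at this ⊢
          omega
        · rw [e1, e2]; rw [c1, c2] at hne; omega
      rw [hprod, map_sub, map_smul, r1, r2, smul_zero, sub_zero]

/-- STATEMENT 9 -/
theorem quasiFree_vanishing_on_unbalanced_monomials
    {𝒜 : Type*} [Ring 𝒜] [Algebra ℂ 𝒜] [StarRing 𝒜] [StarModule ℂ 𝒜]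
    {𝔎 : Type*} [NormedAddCommGroup 𝔎] [InnerProductSpace ℂ 𝔎]
    (a : 𝔎 → 𝒜)
    (hCAR1 : ∀ φ₁ φ₂ : 𝔎, a φ₁ * a φ₂ + a φ₂ * a φ₁ = 0)
    (hCAR2 : ∀ φ₁ φ₂ : 𝔎,
      star (a φ₁) * a φ₂ + a φ₂ * star (a φ₁) = (inner ℂ φ₂ φ₁ : ℂ) • (1 : 𝒜))
    (ρ : 𝒜 →ₗ[ℂ] ℂ) (hρ1 : ρ 1 = 1)
    (hQF0 : ∀ (N₁ N₂ : ℕ), N₁ ≠ N₂ → ∀ (φ : Fin N₁ → 𝔎) (ψ : Fin N₂ → 𝔎),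
      ρ ((List.ofFn fun i : Fin N₁ => star (a (φ i))).prod *
          (List.ofFn fun i : Fin N₂ => a (ψ i.rev)).prod) = 0)
    (N₁ N₂ : ℕ) (hN : N₁ ≠ N₂) (π : Equiv.Perm (Fin (N₁ + N₂)))
    (φ : Fin (N₁ + N₂) → 𝔎) :
    ρ (Opi π (fun q : Fin (N₁ + N₂) =>
        if h : (q : ℕ) < N₁ then star (a (φ q))
        else a (φ ⟨2 * N₁ + N₂ - 1 - (q : ℕ), by have := q.isLt; omega⟩))) = 0 := by
  classical
  set B : Fin (N₁ + N₂) → Bool × 𝔎 := fun q =>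
    if h : (q : ℕ) < N₁ then (true, φ q)
    else (false, φ ⟨2 * N₁ + N₂ - 1 - (q : ℕ), by have := q.isLt; omega⟩) with hB
  have hAB : (fun q : Fin (N₁ + N₂) =>
      if h : (q : ℕ) < N₁ then star (a (φ q))
      else a (φ ⟨2 * N₁ + N₂ - 1 - (q : ℕ), by have := q.isLt; omega⟩))
      = Fop a ∘ B := by
    funext q
    by_cases h : (q : ℕ) < N₁ <;> simp [hB, Fop, h]
  refine Eq.trans (congrArg ρ (congrArg (Opi π) hAB)) ?_
  rw [Opi]
  have hmap : (List.ofFn fun i => (Fop a ∘ B) (π⁻¹ i)) =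
      (List.ofFn fun i => B (π⁻¹ i)).map (Fop a) := by
    rw [List.map_ofFn]; rfl
  rw [hmap]
  -- counts of the permuted list via List.Perm
  have hperm : List.Perm (List.ofFn fun i => B (π⁻¹ i)) (List.ofFn B) := by
    have := Equiv.Perm.ofFn_comp_perm π⁻¹ B
    exact this
  have hcT : (List.ofFn B).countP (fun x => x.1) = N₁ := by
    rw [List.ofFn_add]
    rw [List.countP_append]
    have h1 : (List.ofFn fun i : Fin N₁ => B (Fin.castAdd N₂ i)).countP (fun x => x.1)
        = N₁ := by
      rw [List.countP_eq_length.mpr]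
      · simp
      · intro x hx
        rw [List.mem_ofFn] at hx
        obtain ⟨i, rfl⟩ := hx
        simp [hB, Fin.castAdd, i.isLt]
    have h2 : (List.ofFn fun i : Fin N₂ => B (Fin.natAdd N₁ i)).countP (fun x => x.1)
        = 0 := by
      rw [List.countP_eq_zero.mpr]
      intro x hx
      rw [List.mem_ofFn] at hx
      obtain ⟨i, rfl⟩ := hx
      simp [hB, Fin.natAdd]
    simp only [Fin.castAdd] at h1
    omega
  have hcF : (List.ofFn B).countP (fun x => !x.1) = N₂ := by
    rw [List.ofFn_add]
    rw [List.countP_append]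
    have h1 : (List.ofFn fun i : Fin N₁ => B (Fin.castAdd N₂ i)).countP (fun x => !x.1)
        = 0 := by
      rw [List.countP_eq_zero.mpr]
      intro x hx
      rw [List.mem_ofFn] at hx
      obtain ⟨i, rfl⟩ := hx
      simp [hB, Fin.castAdd, i.isLt]
    have h2 : (List.ofFn fun i : Fin N₂ => B (Fin.natAdd N₁ i)).countP (fun x => !x.1)
        = N₂ := by
      rw [List.countP_eq_length.mpr]
      · simp
      · intro x hx
        rw [List.mem_ofFn] at hx
        obtain ⟨i, rfl⟩ := hx
        simp [hB, Fin.natAdd]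
    simp only [Fin.castAdd] at h1
    omega
  have hvan : ρ (((List.ofFn fun i => B (π⁻¹ i)).map (Fop a)).prod) = 0 := by
    refine key_vanish a hCAR2 ρ hQF0
      ((List.ofFn fun i => B (π⁻¹ i)).length + QFaux.invL (List.ofFn fun i => B (π⁻¹ i)))
      _ le_rfl ?_
    rw [hperm.countP_eq, hperm.countP_eq, hcT, hcF]
    exact hN
  rw [map_zsmul, hvan, smul_zero]
end
end

section
/- (Hölder consequence for density matrices.) Let F be a nonempty finite type and D ∈ Matrix F F ℂ a positive definite matrix with trace 1. Then for every N ∈ ℕ, all r₁,…,r_N ∈ [0,∞) with r₁ + ⋯ + r_N ≤ 1/2, and all matrices A₁,…,A_N ∈ Matrix F F ℂ: ‖ D^{r₁} A₁ D^{r₂} A₂ ⋯ D^{r_N} A_N D^{1/2 − (r₁+⋯+r_N)} ‖_Frob ≤ ∏_{q=1}^N ‖A_q‖, where ‖·‖_Frob is the Frobenius (Hilbert–Schmidt) norm, ‖·‖ is the ℓ²-operator norm, and D^r denotes the real power of the positive definite matrix D (defined via its spectral decomposition/functional calculus). -/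
open scoped BigOperators ComplexOrder

noncomputable section

/-- The real power `D^r` of a Hermitian (in application: positive definite) matrix `D`,
defined by applying `x ↦ x^r` to the eigenvalues in a spectral decomposition
`D = U diag(eigenvalues) U*`. -/
def Matrix.IsHermitian.rpow {F : Type*} [Fintype F] [DecidableEq F] {D : Matrix F F ℂ}
    (hD : D.IsHermitian) (r : ℝ) : Matrix F F ℂ :=
  (hD.eigenvectorUnitary : Matrix F F ℂ) *
    Matrix.diagonal (fun i => ((hD.eigenvalues i ^ r : ℝ) : ℂ)) *
      star (hD.eigenvectorUnitary : Matrix F F ℂ)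

namespace DMH

open Matrix Complex Set Filter
open scoped Matrix.Norms.L2Operator

variable {F : Type*} [Fintype F] [DecidableEq F]

/-- squared Frobenius norm -/
def frobSq (X : Matrix F F ℂ) : ℝ := ∑ i, ∑ k, ‖X i k‖ ^ 2

/-- Frobenius norm -/
def frob (X : Matrix F F ℂ) : ℝ := Real.sqrt (frobSq X)

lemma frobSq_nonneg (X : Matrix F F ℂ) : 0 ≤ frobSq X :=
  Finset.sum_nonneg fun _ _ => Finset.sum_nonneg fun _ _ => sq_nonneg _

lemma frob_nonneg (X : Matrix F F ℂ) : 0 ≤ frob X := Real.sqrt_nonneg _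

lemma frob_sq (X : Matrix F F ℂ) : frob X ^ 2 = frobSq X :=
  Real.sq_sqrt (frobSq_nonneg X)

lemma frob_le_of_sq_le_sq {X : Matrix F F ℂ} {c : ℝ} (hc : 0 ≤ c)
    (h : frobSq X ≤ c ^ 2) : frob X ≤ c := by
  have := Real.sqrt_le_sqrt h
  rwa [Real.sqrt_sq hc] at this

lemma frobSq_conjTranspose (X : Matrix F F ℂ) : frobSq Xᴴ = frobSq X := by
  rw [frobSq, Finset.sum_comm]
  simp [frobSq, Matrix.conjTranspose_apply]

lemma ofReal_frobSq (X : Matrix F F ℂ) : ((frobSq X : ℝ) : ℂ) = (Xᴴ * X).trace := by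
  rw [frobSq, Matrix.trace]
  push_cast
  rw [Finset.sum_comm]
  refine Finset.sum_congr rfl fun k _ => ?_
  rw [Matrix.diag, Matrix.mul_apply]
  refine Finset.sum_congr rfl fun i _ => ?_
  rw [Matrix.conjTranspose_apply, Complex.star_def,
    mul_comm ((starRingEnd ℂ) (X i k)) (X i k), Complex.mul_conj,
    ← Complex.ofReal_pow, Complex.sq_norm]

lemma trace_mul_conjTranspose_self (X : Matrix F F ℂ) :
    (X * Xᴴ).trace = ((frobSq X : ℝ) : ℂ) := by
  rw [ofReal_frobSq, Matrix.trace_mul_comm]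

lemma frobSq_unitary_left {U : Matrix F F ℂ} (hU : star U * U = 1) (X : Matrix F F ℂ) :
    frobSq (U * X) = frobSq X := by
  have h : ((U * X)ᴴ * (U * X)).trace = (Xᴴ * X).trace := by
    rw [Matrix.conjTranspose_mul, Matrix.mul_assoc, ← Matrix.mul_assoc Uᴴ U X,
      ← Matrix.star_eq_conjTranspose U, hU, Matrix.one_mul]
  have := (ofReal_frobSq (U * X)).trans (h.trans (ofReal_frobSq X).symm)
  exact_mod_cast this

lemma frobSq_unitary_right {U : Matrix F F ℂ} (hU : U * star U = 1) (X : Matrix F F ℂ) :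
    frobSq (X * U) = frobSq X := by
  have h1 : frobSq ((X * U)ᴴ) = frobSq (Xᴴ) := by
    rw [Matrix.conjTranspose_mul]
    have hV : star (Uᴴ) * (Uᴴ) = 1 := by
      rw [Matrix.star_eq_conjTranspose, Matrix.conjTranspose_conjTranspose,
        ← Matrix.star_eq_conjTranspose]
      exact hU
    exact frobSq_unitary_left hV Xᴴ
  rwa [frobSq_conjTranspose, frobSq_conjTranspose] at h1

/-- Frobenius norm of product bounded by operator norm on the left. -/
lemma frob_mul_le_left (X Y : Matrix F F ℂ) : frob (X * Y) ≤ ‖X‖ * frob Y := by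
  refine frob_le_of_sq_le_sq (mul_nonneg (norm_nonneg _) (frob_nonneg _)) ?_
  rw [mul_pow, frob_sq]
  have key : ∀ k, (∑ i, ‖(X * Y) i k‖ ^ 2) ≤
      ‖X‖ ^ 2 * ∑ j, ‖Y j k‖ ^ 2 := by
    intro k
    set v : EuclideanSpace ℂ F := (EuclideanSpace.equiv F ℂ).symm (fun j => Y j k) with hv
    have hcol : (fun i => (X * Y) i k) = X *ᵥ (fun j => Y j k) := by
      funext i
      simp [Matrix.mul_apply, Matrix.mulVec, dotProduct]
    have h1 : ‖(EuclideanSpace.equiv F ℂ).symm (X *ᵥ (fun j => Y j k))‖ ≤ ‖X‖ * ‖v‖ :=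
      Matrix.l2_opNorm_mulVec X v
    have h2 : ‖(EuclideanSpace.equiv F ℂ).symm (X *ᵥ (fun j => Y j k))‖ ^ 2 =
        ∑ i, ‖(X * Y) i k‖ ^ 2 := by
      rw [EuclideanSpace.norm_eq, Real.sq_sqrt (Finset.sum_nonneg fun _ _ => sq_nonneg _)]
      refine Finset.sum_congr rfl fun i _ => ?_
      have hent : ((EuclideanSpace.equiv F ℂ).symm (X *ᵥ (fun j => Y j k))) i
          = (X * Y) i k := by
        simp [Matrix.mul_apply, Matrix.mulVec, dotProduct]
      rw [hent]
    have h3 : ‖v‖ ^ 2 = ∑ j, ‖Y j k‖ ^ 2 := by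
      rw [EuclideanSpace.norm_eq, Real.sq_sqrt (Finset.sum_nonneg fun _ _ => sq_nonneg _)]
      refine Finset.sum_congr rfl fun j _ => ?_
      have hent : v j = Y j k := rfl
      rw [hent]
    calc (∑ i, ‖(X * Y) i k‖ ^ 2) = _ ^ 2 := h2.symm
      _ ≤ (‖X‖ * ‖v‖) ^ 2 := pow_le_pow_left₀ (norm_nonneg _) h1 2
      _ = ‖X‖ ^ 2 * ∑ j, ‖Y j k‖ ^ 2 := by rw [mul_pow, h3]
  calc frobSq (X * Y) = ∑ k, ∑ i, ‖(X * Y) i k‖ ^ 2 := Finset.sum_comm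
    _ ≤ ∑ k, ‖X‖ ^ 2 * ∑ j, ‖Y j k‖ ^ 2 :=
        Finset.sum_le_sum fun k _ => key k
    _ = ‖X‖ ^ 2 * frobSq Y := by
        rw [← Finset.mul_sum, frobSq, Finset.sum_comm]

lemma frob_conjTranspose (X : Matrix F F ℂ) : frob Xᴴ = frob X := by
  rw [frob, frob, frobSq_conjTranspose]

lemma frob_mul_le_right (X Y : Matrix F F ℂ) : frob (X * Y) ≤ frob X * ‖Y‖ := by
  have := frob_mul_le_left Yᴴ Xᴴ
  rw [← Matrix.conjTranspose_mul, frob_conjTranspose, frob_conjTranspose,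
    Matrix.l2_opNorm_conjTranspose] at this
  linarith

/-- Cauchy-Schwarz for the trace pairing. -/
lemma abs_trace_mul_le (X W : Matrix F F ℂ) :
    ‖(X * W).trace‖ ≤ frob X * frob W := by
  have htr : (X * W).trace = ∑ p : F × F, X p.1 p.2 * W p.2 p.1 := by
    rw [Matrix.trace, ← Finset.univ_product_univ, Finset.sum_product]
    refine Finset.sum_congr rfl fun i _ => ?_
    rw [Matrix.diag, Matrix.mul_apply]
  have h1 : ‖(X * W).trace‖ ≤
      ∑ p : F × F, ‖X p.1 p.2‖ * ‖W p.2 p.1‖ := by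
    rw [htr]
    refine (norm_sum_le _ _).trans_eq ?_
    exact Finset.sum_congr rfl fun p _ => norm_mul _ _
  have h2 : (∑ p : F × F, ‖X p.1 p.2‖ * ‖W p.2 p.1‖) ^ 2 ≤
      (∑ p : F × F, ‖X p.1 p.2‖ ^ 2) *
        ∑ p : F × F, ‖W p.2 p.1‖ ^ 2 :=
    Finset.sum_mul_sq_le_sq_mul_sq _ _ _
  have hX : (∑ p : F × F, ‖X p.1 p.2‖ ^ 2) = frobSq X := by
    rw [frobSq, ← Finset.univ_product_univ, Finset.sum_product]
  have hW : (∑ p : F × F, ‖W p.2 p.1‖ ^ 2) = frobSq W := by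
    rw [frobSq, Finset.sum_comm, ← Finset.univ_product_univ, Finset.sum_product]
  refine h1.trans ?_
  have hnn : 0 ≤ ∑ p : F × F, ‖X p.1 p.2‖ * ‖W p.2 p.1‖ :=
    Finset.sum_nonneg fun _ _ =>
      mul_nonneg (norm_nonneg _) (norm_nonneg _)
  have := Real.sqrt_le_sqrt h2
  rw [Real.sqrt_sq hnn, hX, hW, Real.sqrt_mul (frobSq_nonneg X)] at this
  exact this

lemma frobSq_diag_conj (d e : F → ℂ) (hd : ∀ i, ‖d i‖ = 1)
    (he : ∀ i, ‖e i‖ = 1) (X : Matrix F F ℂ) :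
    frobSq (Matrix.diagonal d * X * Matrix.diagonal e) = frobSq X := by
  unfold frobSq
  refine Finset.sum_congr rfl fun i _ => Finset.sum_congr rfl fun k _ => ?_
  rw [Matrix.mul_diagonal, Matrix.diagonal_mul, norm_mul, norm_mul,
    hd, he, one_mul, mul_one]

lemma frobSq_diagonal (d : F → ℂ) :
    frobSq (Matrix.diagonal d) = ∑ i, ‖d i‖ ^ 2 := by
  unfold frobSq
  refine Finset.sum_congr rfl fun i _ => ?_
  rw [Finset.sum_eq_single i (fun k _ hk => by
    rw [Matrix.diagonal_apply_ne' _ hk]; simp) (by simp)]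
  rw [Matrix.diagonal_apply_eq]

lemma trace_diag_mul_diag_mul (d e : F → ℂ) (C W : Matrix F F ℂ) :
    ((Matrix.diagonal d * C * Matrix.diagonal e) * W).trace =
      ∑ i, ∑ k, d i * C i k * e k * W k i := by
  rw [Matrix.trace]
  refine Finset.sum_congr rfl fun i _ => ?_
  rw [Matrix.diag, Matrix.mul_apply]
  refine Finset.sum_congr rfl fun k _ => ?_
  rw [Matrix.mul_diagonal, Matrix.diagonal_mul]

section Dpow

variable (lam : F → ℝ)

/-- diagonal matrix of complex powers of the positive weights `lam` -/
def dpow (z : ℂ) : Matrix F F ℂ := Matrix.diagonal fun i => (lam i : ℂ) ^ z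

variable {lam}

lemma dpow_add (hpos : ∀ i, 0 < lam i) (w z : ℂ) :
    dpow lam (w + z) = dpow lam w * dpow lam z := by
  rw [dpow, dpow, dpow, Matrix.diagonal_mul_diagonal]
  exact congrArg Matrix.diagonal (funext fun i =>
    Complex.cpow_add _ _ (Complex.ofReal_ne_zero.mpr (hpos i).ne'))

lemma dpow_zero : dpow lam 0 = 1 := by
  rw [dpow]
  simp [Complex.cpow_zero]

lemma abs_dpow_entry (hpos : ∀ i, 0 < lam i) (z : ℂ) (i : F) :
    ‖(lam i : ℂ) ^ z‖ = lam i ^ z.re :=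
  Complex.norm_cpow_eq_rpow_re_of_pos (hpos i) z

lemma frobSq_dpow_conj (hpos : ∀ i, 0 < lam i) {z w : ℂ} (hz : z.re = 0) (hw : w.re = 0)
    (X : Matrix F F ℂ) :
    frobSq (dpow lam z * X * dpow lam w) = frobSq X := by
  refine frobSq_diag_conj _ _ (fun i => ?_) (fun i => ?_) X
  · rw [abs_dpow_entry hpos, hz, Real.rpow_zero]
  · rw [abs_dpow_entry hpos, hw, Real.rpow_zero]

end Dpow

/-- rotate an alternating product -/
lemma rot_prod {M₀ : Type*} [Monoid M₀] :
    ∀ (n : ℕ) (X : Fin (n + 1) → M₀) (Z : Fin n → M₀),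
      X 0 * (List.ofFn fun q : Fin n => Z q * X q.succ).prod =
        (List.ofFn fun q : Fin n => X q.castSucc * Z q).prod * X (Fin.last n) := by
  intro n
  induction n with
  | zero => intro X Z; simp
  | succ n ih =>
    intro X Z
    have h := ih (fun q => X q.succ) (fun q => Z q.succ)
    simp only [Fin.succ_castSucc, Fin.succ_last] at h
    rw [List.ofFn_succ (f := fun q : Fin (n + 1) => Z q * X q.succ), List.prod_cons,
      List.ofFn_succ (f := fun q : Fin (n + 1) => X q.castSucc * Z q), List.prod_cons]
    simp only [Fin.castSucc_zero]
    rw [mul_assoc (Z 0), ← mul_assoc (X 0), h, ← mul_assoc]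

/-- the interleaved product `Λ^{e₀} B₀ Λ^{e₁} B₁ ⋯ B_{n-1} Λ^{e_n}` -/
def Gprod (lam : F → ℝ) {n : ℕ} (e : Fin (n + 1) → ℝ) (B : Fin n → Matrix F F ℂ) :
    Matrix F F ℂ :=
  (List.ofFn fun q : Fin n => dpow lam (e q.castSucc : ℝ) * B q).prod *
    dpow lam (e (Fin.last n) : ℝ)

/-- Key diagonal Hölder-type estimate, proved by induction on the number of factors,
with a Phragmén–Lindelöf (three-lines) interpolation at each step. -/
theorem key {lam : F → ℝ} (hpos : ∀ i, 0 < lam i) (hle : ∀ i, lam i ≤ 1)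
    (hsum : ∑ i, lam i = 1) :
    ∀ n : ℕ, ∀ e : Fin (n + 1) → ℝ, (∀ q, 0 ≤ e q) → (∑ q, e q = 1 / 2) →
      ∀ B : Fin n → Matrix F F ℂ, frob (Gprod lam e B) ≤ ∏ q, ‖B q‖ := by
  intro n
  induction n with
  | zero =>
    intro e he hesum B
    have he0 : e (Fin.last 0) = 1 / 2 := by
      rw [Fin.sum_univ_one] at hesum
      simpa using hesum
    have hG : Gprod lam e B = dpow lam (e (Fin.last 0)) := by
      rw [Gprod, List.ofFn_zero, List.prod_nil, one_mul]
    rw [hG, he0]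
    have hfs : frobSq (dpow lam ((1:ℝ)/2 : ℝ)) = 1 := by
      rw [dpow, frobSq_diagonal]
      have : ∀ i, ‖(lam i : ℂ) ^ (((1:ℝ)/2 : ℝ) : ℂ)‖ ^ 2 = lam i := by
        intro i
        rw [abs_dpow_entry hpos]
        rw [Complex.ofReal_re]
        rw [← Real.rpow_natCast (lam i ^ ((1:ℝ)/2)) 2, ← Real.rpow_mul (hpos i).le]
        norm_num
      rw [Finset.sum_congr rfl fun i _ => this i, hsum]
    rw [frob, hfs]
    simp
  | succ n ih =>
    intro e he hesum B
    set s : ℝ := e 0 + e (Fin.last (n + 1)) with hsdef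
    set m : Fin n → ℝ := fun q => e q.succ.castSucc with hmdef
    set R : Matrix F F ℂ := (List.ofFn fun q : Fin n => dpow lam (m q : ℝ) * B q.succ).prod
      with hRdef
    set Cm : Matrix F F ℂ := B 0 * R with hCdef
    -- sum splitting
    have hsplit : s + ∑ q : Fin n, m q = 1 / 2 := by
      rw [Fin.sum_univ_succ] at hesum
      rw [Fin.sum_univ_castSucc (fun q : Fin (n + 1) => e q.succ)] at hesum
      simp only [Fin.succ_castSucc, Fin.succ_last] at hesum
      rw [hsdef, hmdef]
      linarith
    -- identity (i)
    have iM : Gprod lam e B = dpow lam (e 0 : ℝ) * Cm * dpow lam (e (Fin.last (n + 1)) : ℝ) := by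
      rw [Gprod, List.ofFn_succ, List.prod_cons, hCdef, hRdef]
      simp only [Fin.castSucc_zero, Fin.succ_castSucc, mul_assoc]
      rfl
    -- identity (ii) and endpoint bound at Re z = 0
    have hb0 : frob (Cm * dpow lam (s : ℝ)) ≤ ∏ q : Fin (n + 1), ‖B q‖ := by
      have hii : Cm * dpow lam (s : ℝ) =
          B 0 * Gprod lam (Fin.snoc m s) (fun q => B q.succ) := by
        rw [Gprod, hCdef]
        simp only [Fin.snoc_castSucc, Fin.snoc_last, mul_assoc]
        rfl
      rw [hii]
      have hIH := ih (Fin.snoc m s)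
        (fun q => by
          refine Fin.lastCases ?_ (fun q => ?_) q
          · rw [Fin.snoc_last]
            exact add_nonneg (he 0) (he _)
          · rw [Fin.snoc_castSucc]
            exact he _)
        (by
          rw [Fin.sum_univ_castSucc (f := Fin.snoc m s)]
          simp only [Fin.snoc_castSucc, Fin.snoc_last]
          linarith)
        (fun q => B q.succ)
      refine (frob_mul_le_left _ _).trans ?_
      calc ‖B 0‖ * frob (Gprod lam (Fin.snoc m s) fun q => B q.succ)
          ≤ ‖B 0‖ * ∏ q : Fin n, ‖B q.succ‖ :=
            mul_le_mul_of_nonneg_left hIH (norm_nonneg _)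
        _ = ∏ q : Fin (n + 1), ‖B q‖ := (Fin.prod_univ_succ (fun q : Fin (n + 1) => ‖B q‖)).symm
    -- identity (iii) and endpoint bound at Re z = s
    have hbs : frob (dpow lam (s : ℝ) * Cm) ≤ ∏ q : Fin (n + 1), ‖B q‖ := by
      have h1 := rot_prod n B (fun q => dpow lam (m q : ℝ))
      have h2 := rot_prod n (fun q : Fin (n + 1) => dpow lam ((Fin.cons s m : Fin (n + 1) → ℝ) q : ℝ))
        (fun q => B q.castSucc)
      simp only [Fin.cons_zero, Fin.cons_succ] at h2
      have hiii : dpow lam (s : ℝ) * Cm =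
          Gprod lam (Fin.cons s m) (fun q : Fin n => B q.castSucc) * B (Fin.last n) := by
        rw [hCdef, hRdef, h1, ← mul_assoc, h2, Gprod]
      rw [hiii]
      have hIH := ih (Fin.cons s m)
        (fun q => by
          refine Fin.cases ?_ (fun q => ?_) q
          · rw [Fin.cons_zero]
            exact add_nonneg (he 0) (he _)
          · rw [Fin.cons_succ]
            exact he _)
        (by
          rw [Fin.sum_cons]
          linarith)
        (fun q => B q.castSucc)
      refine (frob_mul_le_right _ _).trans ?_
      calc frob (Gprod lam (Fin.cons s m) fun q : Fin n => B q.castSucc) * ‖B (Fin.last n)‖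
          ≤ (∏ q : Fin n, ‖B q.castSucc‖) * ‖B (Fin.last n)‖ :=
            mul_le_mul_of_nonneg_right hIH (norm_nonneg _)
        _ = ∏ q : Fin (n + 1), ‖B q‖ := (Fin.prod_univ_castSucc (fun q : Fin (n + 1) => ‖B q‖)).symm
    -- degenerate case
    by_cases hs : s = 0
    · have he0 : e 0 = 0 := by
        have := he 0
        have := he (Fin.last (n + 1))
        rw [hsdef] at hs
        linarith
      have hel : e (Fin.last (n + 1)) = 0 := by
        have := he 0
        have := he (Fin.last (n + 1))
        rw [hsdef] at hs
        linarith
      have : Gprod lam e B = Cm * dpow lam (s : ℝ) := by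
        rw [iM, he0, hel, hs]
        rw [Complex.ofReal_zero, dpow_zero, one_mul, mul_one]
      rw [this]
      exact hb0
    · have hs' : 0 < s := lt_of_le_of_ne (add_nonneg (he 0) (he _)) (Ne.symm hs)
      set P : ℝ := ∏ q : Fin (n + 1), ‖B q‖ with hPdef
      have hP : 0 ≤ P := Finset.prod_nonneg fun _ _ => norm_nonneg _
      set M : Matrix F F ℂ := Gprod lam e B with hMdef
      set f : ℂ → ℂ := fun z => ((dpow lam z * Cm * dpow lam ((s : ℂ) - z)) * Mᴴ).trace
        with hfdef
      have hform : f = fun z => ∑ i, ∑ k,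
          (lam i : ℂ) ^ z * Cm i k * (lam k : ℂ) ^ ((s : ℂ) - z) * Mᴴ k i :=
        funext fun z => trace_diag_mul_diag_mul _ _ _ _
      have hdiff : Differentiable ℂ f := by
        rw [hform]
        refine Differentiable.fun_sum fun i _ => Differentiable.fun_sum fun k _ => ?_
        have hne : ∀ j : F, ((lam j : ℂ)) ≠ 0 := fun j =>
          Complex.ofReal_ne_zero.mpr (hpos j).ne'
        have hdi : Differentiable ℂ fun z : ℂ => (lam i : ℂ) ^ z := by
          have hrw : (fun z : ℂ => (lam i : ℂ) ^ z) =
              fun z => Complex.exp (Complex.log (lam i : ℂ) * z) :=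
            funext fun z => Complex.cpow_def_of_ne_zero (hne i) z
          rw [hrw]
          exact Complex.differentiable_exp.comp ((differentiable_const _).mul differentiable_id)
        have hdk : Differentiable ℂ fun z : ℂ => (lam k : ℂ) ^ ((s : ℂ) - z) := by
          have hrw : (fun z : ℂ => (lam k : ℂ) ^ ((s : ℂ) - z)) =
              fun z => Complex.exp (Complex.log (lam k : ℂ) * ((s : ℂ) - z)) :=
            funext fun z => Complex.cpow_def_of_ne_zero (hne k) _
          rw [hrw]
          exact Complex.differentiable_exp.comp
            ((differentiable_const _).mul ((differentiable_const _).sub differentiable_id))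
        exact ((hdi.mul (differentiable_const _)).mul hdk).mul (differentiable_const _)
      set K : ℝ := ∑ i, ∑ k, ‖Cm i k‖ * ‖Mᴴ k i‖ with hKdef
      have hbdd : ∀ z : ℂ, 0 ≤ z.re → z.re ≤ s → ‖f z‖ ≤ K := by
        intro z h0 h1
        rw [hform]
        refine (norm_sum_le _ _).trans ?_
        rw [hKdef]
        refine Finset.sum_le_sum fun i _ => ?_
        refine (norm_sum_le _ _).trans ?_
        refine Finset.sum_le_sum fun k _ => ?_
        rw [norm_mul, norm_mul, norm_mul,
          abs_dpow_entry hpos, abs_dpow_entry hpos]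
        have hri : lam i ^ z.re ≤ 1 := Real.rpow_le_one (hpos i).le (hle i) h0
        have hrk : lam k ^ ((s : ℂ) - z).re ≤ 1 := by
          refine Real.rpow_le_one (hpos k).le (hle k) ?_
          rw [Complex.sub_re, Complex.ofReal_re]
          linarith
        have h2 : (0:ℝ) ≤ lam i ^ z.re := Real.rpow_nonneg (hpos i).le _
        have h3 : (0:ℝ) ≤ lam k ^ ((s : ℂ) - z).re := Real.rpow_nonneg (hpos k).le _
        calc lam i ^ z.re * ‖Cm i k‖ * (lam k ^ ((s : ℂ) - z).re) *
              ‖Mᴴ k i‖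
            ≤ 1 * ‖Cm i k‖ * 1 * ‖Mᴴ k i‖ := by
              gcongr <;> first
                | exact norm_nonneg _
                | positivity
          _ = ‖Cm i k‖ * ‖Mᴴ k i‖ := by ring
      have hC0 : ∀ z : ℂ, z.re = 0 → ‖f z‖ ≤ P * frob M := by
        intro z hz
        have hd : dpow lam ((s : ℂ) - z) = dpow lam (s : ℝ) * dpow lam (-z) := by
          rw [← dpow_add hpos, sub_eq_add_neg]
        rw [hfdef]
        simp only []
        rw [hd, show dpow lam z * Cm * (dpow lam (s : ℝ) * dpow lam (-z)) =
          dpow lam z * (Cm * dpow lam (s : ℝ)) * dpow lam (-z) by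
            simp only [mul_assoc]]
        refine (abs_trace_mul_le _ _).trans ?_
        rw [frob_conjTranspose]
        have hfr : frob (dpow lam z * (Cm * dpow lam (s : ℝ)) * dpow lam (-z)) =
            frob (Cm * dpow lam (s : ℝ)) := by
          rw [frob, frob, frobSq_dpow_conj hpos hz (by simp [hz])]
        rw [hfr]
        exact mul_le_mul_of_nonneg_right hb0 (frob_nonneg _)
      have hCs : ∀ z : ℂ, z.re = s → ‖f z‖ ≤ P * frob M := by
        intro z hz
        set w : ℂ := z - (s : ℂ) with hwdef
        have hwre : w.re = 0 := by
          rw [hwdef, Complex.sub_re, Complex.ofReal_re, hz, sub_self]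
        have h1 : dpow lam z = dpow lam w * dpow lam (s : ℝ) := by
          have hz' : w + ((s : ℝ) : ℂ) = z := by rw [hwdef]; ring
          rw [← hz', dpow_add hpos]
        have h2 : dpow lam ((s : ℂ) - z) = dpow lam (-w) := by
          have hz' : (s : ℂ) - z = -w := by rw [hwdef]; ring
          rw [hz']
        rw [hfdef]
        simp only []
        rw [h1, h2, show dpow lam w * dpow lam (s : ℝ) * Cm * dpow lam (-w) =
          dpow lam w * (dpow lam (s : ℝ) * Cm) * dpow lam (-w) by
            simp only [mul_assoc]]
        refine (abs_trace_mul_le _ _).trans ?_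
        rw [frob_conjTranspose]
        have hfr : frob (dpow lam w * (dpow lam (s : ℝ) * Cm) * dpow lam (-w)) =
            frob (dpow lam (s : ℝ) * Cm) := by
          rw [frob, frob, frobSq_dpow_conj hpos hwre (by simp [hwre])]
        rw [hfr]
        exact mul_le_mul_of_nonneg_right hbs (frob_nonneg _)
      have hPL : ‖f ((e 0 : ℝ) : ℂ)‖ ≤ P * frob M := by
        refine PhragmenLindelof.vertical_strip (a := 0) (b := s)
          hdiff.diffContOnCl ?_ hC0 hCs ?_ ?_
        · refine ⟨0, by rw [sub_zero]; exact div_pos Real.pi_pos hs', 0, ?_⟩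
          refine Asymptotics.IsBigO.of_bound K ?_
          rw [Filter.eventually_inf_principal]
          refine Filter.Eventually.of_forall fun z hz => ?_
          simp only [Set.mem_preimage, Set.mem_Ioo] at hz
          have := hbdd z hz.1.le hz.2.le
          simpa using this
        · rw [Complex.ofReal_re]
          exact he 0
        · rw [Complex.ofReal_re, hsdef]
          exact le_add_of_nonneg_right (he _)
      have heval : f ((e 0 : ℝ) : ℂ) = ((frobSq M : ℝ) : ℂ) := by
        rw [hfdef]
        simp only []
        have h3 : ((s : ℂ) - ((e 0 : ℝ) : ℂ)) = ((e (Fin.last (n + 1)) : ℝ) : ℂ) := by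
          rw [← Complex.ofReal_sub]
          congr 1
          rw [hsdef]
          ring
        rw [h3, ← iM, trace_mul_conjTranspose_self]
      rw [heval, Complex.norm_real, Real.norm_eq_abs, _root_.abs_of_nonneg (frobSq_nonneg _)] at hPL
      rcases eq_or_lt_of_le (frob_nonneg M) with h0 | h0
      · exact le_trans (le_of_eq h0.symm) hP
      · have hfin : frob M * frob M ≤ P * frob M := by
          rw [← frob_sq, sq] at hPL
          exact hPL
        exact le_of_mul_le_mul_right hfin h0

end DMH

open DMH in
/-- STATEMENT 15 (Hölder consequence for density matrices): if `D` is a positive definite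
matrix with trace `1`, then for all `r₁, …, r_N ≥ 0` with `r₁ + ⋯ + r_N ≤ 1/2` and all
matrices `A₁, …, A_N`,
`‖D^{r₁} A₁ D^{r₂} A₂ ⋯ D^{r_N} A_N D^{1/2 - (r₁ + ⋯ + r_N)}‖_Frob ≤ ∏ q ‖A_q‖`,
where `‖·‖_Frob` is the Frobenius (Hilbert–Schmidt) norm and `‖·‖` the `ℓ²`-operator norm. -/
theorem density_matrix_hoelder_bound
    (F : Type*) [Fintype F] [DecidableEq F] [Nonempty F]
    (D : Matrix F F ℂ) (hD : D.PosDef) (htr : D.trace = 1)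
    (N : ℕ) (r : Fin N → ℝ) (hr0 : ∀ q, 0 ≤ r q) (hrsum : ∑ q, r q ≤ 1 / 2)
    (A : Fin N → Matrix F F ℂ) :
    Real.sqrt (∑ i : F, ∑ k : F,
        ‖
          (((List.ofFn fun q : Fin N => hD.1.rpow (r q) * A q).prod *
              hD.1.rpow (1 / 2 - ∑ q, r q)) i k)‖ ^ 2) ≤
      ∏ q : Fin N, ‖Matrix.toEuclideanCLM (𝕜 := ℂ) (A q)‖ := by
  classical
  set U : Matrix F F ℂ := (hD.1.eigenvectorUnitary : Matrix F F ℂ) with hUdef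
  have hUl : star U * U = 1 := Unitary.coe_star_mul_self hD.1.eigenvectorUnitary
  have hUr : U * star U = 1 := Unitary.coe_mul_star_self hD.1.eigenvectorUnitary
  set lam : F → ℝ := hD.1.eigenvalues with hlamdef
  have hpos : ∀ i, 0 < lam i := hD.eigenvalues_pos
  have hsum : ∑ i, lam i = 1 := by
    have hspec := hD.1.spectral_theorem
    have h1 : D.trace = (Matrix.diagonal (RCLike.ofReal ∘ lam)).trace := by
      conv_lhs => rw [hspec, Unitary.conjStarAlgAut_apply]
      rw [Matrix.trace_mul_cycle, hUl, Matrix.one_mul]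
    rw [htr, Matrix.trace_diagonal] at h1
    have h2 : ((∑ i, lam i : ℝ) : ℂ) = 1 := by
      rw [Complex.ofReal_sum]
      exact h1.symm
    exact_mod_cast h2
  have hle1 : ∀ i, lam i ≤ 1 := by
    intro i
    have h1 : lam i ≤ ∑ j, lam j :=
      Finset.single_le_sum (fun j _ => (hpos j).le) (Finset.mem_univ i)
    rwa [hsum] at h1
  have hrpow : ∀ c : ℝ, hD.1.rpow c = U * dpow lam (c : ℝ) * star U := by
    intro c
    rw [Matrix.IsHermitian.rpow, dpow]
    refine congrArg₂ _ (congrArg₂ _ rfl ?_) rfl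
    exact congrArg Matrix.diagonal (funext fun i => Complex.ofReal_cpow (hpos i).le c)
  set t : ℝ := 1 / 2 - ∑ q, r q with htdef
  have ht0 : 0 ≤ t := sub_nonneg.mpr hrsum
  set Bc : Fin N → Matrix F F ℂ := fun q => star U * A q * U with hBcdef
  have hconj : ∀ (k : ℕ) (c : Fin k → ℝ) (A' : Fin k → Matrix F F ℂ),
      (List.ofFn fun q : Fin k => (U * dpow lam (c q : ℝ) * star U) * A' q).prod
        = U * (List.ofFn fun q : Fin k => dpow lam (c q : ℝ) * (star U * A' q * U)).prod
          * star U := by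
    intro k
    induction k with
    | zero =>
      intro c A'
      simp only [List.ofFn_zero, List.prod_nil, Matrix.mul_one]
      exact hUr.symm
    | succ k ihk =>
      intro c A'
      rw [List.ofFn_succ, List.prod_cons, List.ofFn_succ, List.prod_cons,
        ihk (fun q => c q.succ) (fun q => A' q.succ)]
      simp only [Matrix.mul_assoc]
  have hM : (List.ofFn fun q : Fin N => hD.1.rpow (r q) * A q).prod * hD.1.rpow t
      = U * Gprod lam (Fin.snoc r t) Bc * star U := by
    have h1 : (List.ofFn fun q : Fin N => hD.1.rpow (r q) * A q) =
        (List.ofFn fun q : Fin N => (U * dpow lam (r q : ℝ) * star U) * A q) := by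
      congr 1
      funext q
      rw [hrpow]
    have h2 : ∀ Q S : Matrix F F ℂ, (U * Q * star U) * (U * S * star U)
        = U * (Q * S) * star U := by
      intro Q S
      calc (U * Q * star U) * (U * S * star U)
          = U * Q * (star U * U) * (S * star U) := by
            simp only [Matrix.mul_assoc]
        _ = U * (Q * S) * star U := by
            rw [hUl, Matrix.mul_one]
            simp only [Matrix.mul_assoc]
    have h3 : Gprod lam (Fin.snoc r t) Bc =
        (List.ofFn fun q : Fin N => dpow lam (r q : ℝ) * (star U * A q * U)).prod *
          dpow lam (t : ℝ) := by
      rw [Gprod]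
      simp only [Fin.snoc_castSucc, Fin.snoc_last, hBcdef]
    rw [h1, hconj N r A, hrpow t, h2, h3]
  have hgoal : Real.sqrt (∑ i : F, ∑ k : F,
      ‖((List.ofFn fun q : Fin N => hD.1.rpow (r q) * A q).prod *
            hD.1.rpow (1 / 2 - ∑ q, r q)) i k‖ ^ 2)
      = frob (U * Gprod lam (Fin.snoc r t) Bc * star U) := by
    rw [← htdef, hM]
    rfl
  rw [hgoal]
  have hinv : frob (U * Gprod lam (Fin.snoc r t) Bc * star U)
      = frob (Gprod lam (Fin.snoc r t) Bc) := by
    rw [frob, frob, Matrix.mul_assoc, frobSq_unitary_left hUl,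
      frobSq_unitary_right (by rw [star_star]; exact hUl) _]
  rw [hinv]
  have hkey := key hpos hle1 hsum N (Fin.snoc r t)
    (fun q => by
      refine Fin.lastCases ?_ (fun q => ?_) q
      · rw [Fin.snoc_last]; exact ht0
      · rw [Fin.snoc_castSucc]; exact hr0 q)
    (by
      rw [Fin.sum_univ_castSucc (f := Fin.snoc r t)]
      simp only [Fin.snoc_castSucc, Fin.snoc_last]
      rw [htdef]
      ring)
    Bc
  open scoped Matrix.Norms.L2Operator in
  have hnormU : ‖U‖ = 1 := by
    have h2 := Matrix.l2_opNorm_conjTranspose_mul_self U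
    rw [← Matrix.star_eq_conjTranspose, hUl, norm_one] at h2
    have := h2.symm
    nlinarith [norm_nonneg U]
  open scoped Matrix.Norms.L2Operator in
  have hnormsU : ‖star U‖ = 1 := by
    rw [Matrix.star_eq_conjTranspose, Matrix.l2_opNorm_conjTranspose]
    exact hnormU
  open scoped Matrix.Norms.L2Operator in
  have hBnorm : ∀ q, ‖Bc q‖ ≤ ‖A q‖ := by
    intro q
    calc ‖star U * A q * U‖ ≤ ‖star U * A q‖ * ‖U‖ := Matrix.l2_opNorm_mul _ _
      _ ≤ ‖star U‖ * ‖A q‖ * ‖U‖ :=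
          mul_le_mul_of_nonneg_right (Matrix.l2_opNorm_mul _ _) (norm_nonneg _)
      _ = ‖A q‖ := by rw [hnormU, hnormsU, one_mul, mul_one]
  refine hkey.trans ?_
  have hfinal : ∏ q : Fin N, ‖Bc q‖ ≤ ∏ q : Fin N, ‖A q‖ :=
    Finset.prod_le_prod (fun _ _ => norm_nonneg _) (fun q _ => hBnorm q)
  refine hfinal.trans_eq ?_
  exact Finset.prod_congr rfl fun q _ => Matrix.cstar_norm_def (A q)
end
end
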